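/- Let F be a perfect field of characteristic p > 0, T = F[x_i^α : i ∈ ℕ, α ∈ ℚ≥0] the monoid algebra over the monoid of finitely supported functions ℕ → ℚ≥0, I the ideal generated by all monomials of total degree strictly greater than 1, and R = T/I. Then R has no atoms: for every nonzero nonunit a ∈ R there exist b, c ∈ R with a = b·c, (a) ≠ (b), and (a) ≠ (c). In particular R is not atomic. -/

import Mathlib

set_option maxHeartbeats 1000000

open scoped NNRat

section Aux
variable {F : Type*} [Field F] {p : ℕ} [Fact p.Prime] [CharP F p] [PerfectRing F p]

local notation "T" => AddMonoidAlgebra F (ℕ →₀ ℚ≥0)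

omit [Fact (Nat.Prime p)] [PerfectRing F p] in
lemma charP_T : CharP (AddMonoidAlgebra F (ℕ →₀ ℚ≥0)) p := by
  refine charP_of_injective_algebraMap (R := F) ?_ p
  intro x y h
  have := congrArg (fun f : T => f.coeff 0) h
  simpa [AddMonoidAlgebra.coe_algebraMap, AddMonoidAlgebra.coeff_single] using this

lemma frob_surj (t : T) : ∃ s : T, s ^ p = t := by
  haveI := charP_T (F := F) (p := p)
  have hp : (p : ℚ≥0) ≠ 0 := Nat.cast_ne_zero.mpr (Fact.out : p.Prime).ne_zero
  induction t using AddMonoidAlgebra.induction with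
  | zero => exact ⟨0, zero_pow (Fact.out : p.Prime).ne_zero⟩
  | single_add e c f he hc ih =>
    obtain ⟨s, hs⟩ := ih
    refine ⟨(AddMonoidAlgebra.single ((p : ℚ≥0)⁻¹ • e) ((frobeniusEquiv F p).symm c) : T)
      + s, ?_⟩
    rw [add_pow_char, hs]
    congr 1
    rw [AddMonoidAlgebra.single_pow _ _ p, frobeniusEquiv_symm_pow_p,
      ← Nat.cast_smul_eq_nsmul ℚ≥0, smul_smul, mul_inv_cancel₀ hp, one_smul]

omit [Fact (Nat.Prime p)] [CharP F p] [PerfectRing F p] in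
lemma nilp (I : Ideal T)
    (hI : ∀ e : ℕ →₀ ℚ≥0, 1 < e.sum (fun _ v => v) → AddMonoidAlgebra.single e (1 : F) ∈ I)
    (t : T) (h : t.coeff 0 = 0) : IsNilpotent (Ideal.Quotient.mk I t) := by
  induction t using AddMonoidAlgebra.induction with
  | zero => exact ⟨1, by simp⟩
  | single_add e c f he hc ih =>
    have hf0 : f.coeff 0 = 0 := by
      by_cases h0 : e = 0
      · exact Finsupp.notMem_support_iff.mp (h0 ▸ he)
      · have := h
        simpa [AddMonoidAlgebra.coeff_add, AddMonoidAlgebra.coeff_single, Finsupp.add_apply, Finsupp.single_apply, h0] using this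
    have he0 : e ≠ 0 := by
      rintro rfl
      exact hc (by simpa [AddMonoidAlgebra.coeff_add, AddMonoidAlgebra.coeff_single, Finsupp.add_apply, hf0] using h)
    have key : Ideal.Quotient.mk I ((AddMonoidAlgebra.single e c : T) + (show T from f))
        = Ideal.Quotient.mk I (AddMonoidAlgebra.single e c : T)
          + Ideal.Quotient.mk I (show T from f) :=
      RingHom.map_add _ _ _
    rw [show (Ideal.Quotient.mk I (AddMonoidAlgebra.single e c + f) : T ⧸ I)
        = Ideal.Quotient.mk I ((AddMonoidAlgebra.single e c : T) + (show T from f)) from rfl,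
      key]
    refine (Commute.all _ _).isNilpotent_add ?_ (ih hf0)
    -- nilpotency of the monomial
    set d : ℚ≥0 := e.sum (fun _ v => v) with hd
    obtain ⟨i, hi⟩ : ∃ i, e i ≠ 0 := by
      by_contra hcon
      push_neg at hcon
      exact he0 (Finsupp.ext hcon)
    have hdpos : 0 < d := by
      have : e i ≤ d :=
        Finset.single_le_sum (f := fun j => e j) (fun j _ => zero_le)
          (Finsupp.mem_support_iff.mpr hi)
      exact lt_of_lt_of_le (lt_of_le_of_ne zero_le (Ne.symm hi)) this
    obtain ⟨k, hk⟩ := exists_nat_gt (1 / d)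
    have hk1 : 1 < (k : ℚ≥0) * d := (div_lt_iff₀ hdpos).mp hk
    refine ⟨k, ?_⟩
    rw [← map_pow, AddMonoidAlgebra.single_pow _ _ k, Ideal.Quotient.eq_zero_iff_mem]
    have hsum : (k • e).sum (fun _ v => v) = (k : ℚ≥0) * d := by
      rw [← Nat.cast_smul_eq_nsmul ℚ≥0, Finsupp.sum_smul_index (fun i => rfl)]
      rw [hd, Finsupp.sum, Finsupp.sum, Finset.mul_sum]
    have hmem : AddMonoidAlgebra.single (k • e) (1 : F) ∈ I := hI _ (hsum ▸ hk1)
    have h2 : (AddMonoidAlgebra.single (k • e) (c ^ k) : T)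
        = (AddMonoidAlgebra.single 0 (c ^ k) : T) * (AddMonoidAlgebra.single (k • e) 1 : T) := by
      rw [AddMonoidAlgebra.single_mul_single, zero_add, mul_one]
    rw [h2]
    exact I.mul_mem_left _ hmem

end Aux

theorem antimatter_quotient (F : Type*) [Field F] (p : ℕ) [Fact p.Prime]
    [CharP F p] [PerfectRing F p] :
    let T := AddMonoidAlgebra F (ℕ →₀ ℚ≥0)
    let I : Ideal T := Ideal.span
      {m : T | ∃ e : ℕ →₀ ℚ≥0, 1 < e.sum (fun _ v => v) ∧ m = AddMonoidAlgebra.single e (1 : F)}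
    ∀ a : T ⧸ I, a ≠ 0 → ¬IsUnit a →
      ∃ b c : T ⧸ I, a = b * c ∧
        Ideal.span {a} ≠ Ideal.span {b} ∧ Ideal.span {a} ≠ Ideal.span {c} := by
  intro T I a ha hu
  have hp2 : 2 ≤ p := (Fact.out : p.Prime).two_le
  have hIgen : ∀ e : ℕ →₀ ℚ≥0, 1 < e.sum (fun _ v => v) → AddMonoidAlgebra.single e (1 : F) ∈ I :=
    fun e he => Ideal.subset_span ⟨e, he, rfl⟩
  obtain ⟨t, rfl⟩ := Ideal.Quotient.mk_surjective a
  -- step 1 : a is nilpotent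
  have hnilsub : IsNilpotent (Ideal.Quotient.mk I (t - AddMonoidAlgebra.single 0 (t.coeff 0))) := by
    refine nilp I hIgen _ ?_
    rw [AddMonoidAlgebra.coeff_sub, Finsupp.sub_apply, AddMonoidAlgebra.coeff_single, Finsupp.single_eq_same, sub_self]
  have ht0 : t.coeff 0 = 0 := by
    by_contra h0
    apply hu
    have hunit : IsUnit (Ideal.Quotient.mk I (AddMonoidAlgebra.single 0 (t.coeff 0) : T)) := by
      refine IsUnit.of_mul_eq_one (Ideal.Quotient.mk I (AddMonoidAlgebra.single 0 (t.coeff 0)⁻¹)) ?_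
      rw [← RingHom.map_mul, AddMonoidAlgebra.single_mul_single, add_zero,
        mul_inv_cancel₀ h0]
      exact congrArg _ rfl
    have : (Ideal.Quotient.mk I t : T ⧸ I)
        = Ideal.Quotient.mk I (AddMonoidAlgebra.single 0 (t.coeff 0))
          + Ideal.Quotient.mk I (t - AddMonoidAlgebra.single 0 (t.coeff 0)) := by
      rw [← RingHom.map_add, add_sub_cancel]
    rw [this]
    exact hnilsub.isUnit_add_left_of_commute hunit (Commute.all _ _)
  have hanil : IsNilpotent (Ideal.Quotient.mk I t) := nilp I hIgen t ht0
  -- step 2 : p-th root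
  obtain ⟨s, hs⟩ := frob_surj (p := p) t
  set b : T ⧸ I := Ideal.Quotient.mk I s with hbdef
  have hbp : b ^ p = Ideal.Quotient.mk I t := by rw [hbdef, ← RingHom.map_pow, hs]
  have hbnil : IsNilpotent b := by
    obtain ⟨k, hk⟩ := hanil
    exact ⟨p * k, by rw [pow_mul, hbp, hk]⟩
  have hfac : Ideal.Quotient.mk I t = b * b ^ (p - 1) := by
    rw [mul_pow_sub_one (show p ≠ 0 by omega) b, hbp]
  have hb0 : b ≠ 0 := by
    intro h0
    exact ha (by rw [hfac, h0, zero_mul])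
  have hc0 : b ^ (p - 1) ≠ 0 := by
    intro h0
    exact ha (by rw [hfac, h0, mul_zero])
  refine ⟨b, b ^ (p - 1), hfac, ?_, ?_⟩
  · intro hspan
    have hmem : b ∈ Ideal.span {(Ideal.Quotient.mk I t : T ⧸ I)} := by
      rw [hspan]; exact Ideal.mem_span_singleton_self b
    obtain ⟨x, hx⟩ := Ideal.mem_span_singleton'.mp hmem
    have hkey : b * (1 - x * b ^ (p - 1)) = 0 := by
      have hr : b * (x * b ^ (p - 1)) = x * (b * b ^ (p - 1)) := by ring
      rw [mul_sub, mul_one, hr, ← hfac, hx, sub_self]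
    have hunit : IsUnit (1 - x * b ^ (p - 1)) :=
      ((Commute.all x _).isNilpotent_mul_left (hbnil.pow_of_pos (show p - 1 ≠ 0 by omega))).isUnit_one_sub
    obtain ⟨v, hv⟩ := hunit.exists_right_inv
    apply hb0
    calc b = b * ((1 - x * b ^ (p - 1)) * v) := by rw [hv, mul_one]
    _ = b * (1 - x * b ^ (p - 1)) * v := by ring
    _ = 0 := by rw [hkey, zero_mul]
  · intro hspan
    have hmem : b ^ (p - 1) ∈ Ideal.span {(Ideal.Quotient.mk I t : T ⧸ I)} := by
      rw [hspan]; exact Ideal.mem_span_singleton_self _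
    obtain ⟨x, hx⟩ := Ideal.mem_span_singleton'.mp hmem
    have hkey : b ^ (p - 1) * (1 - x * b) = 0 := by
      have hr : b ^ (p - 1) * (x * b) = x * (b * b ^ (p - 1)) := by ring
      rw [mul_sub, mul_one, hr, ← hfac, hx, sub_self]
    have hunit : IsUnit (1 - x * b) := ((Commute.all x _).isNilpotent_mul_left hbnil).isUnit_one_sub
    obtain ⟨v, hv⟩ := hunit.exists_right_inv
    apply hc0
    calc b ^ (p - 1) = b ^ (p - 1) * ((1 - x * b) * v) := by rw [hv, mul_one]
    _ = b ^ (p - 1) * (1 - x * b) * v := by ring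
    _ = 0 := by rw [hkey, zero_mul]
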